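/- For any Veltman model M = ⟨F, ev⟩, the ultrafilter extension M^ue is modally saturated: for every ⟨f, σ⟩ ∈ W^ue and every set Σ of formulas such that M^ue, ⟨f, σ⟩ ⊩ ◇(⋀Σ') for every finite Σ' ⊆ Σ, there exists ⟨g, τ⟩ ∈ W^ue with ⟨f, σ⟩ R^ue ⟨g, τ⟩ and M^ue, ⟨g, τ⟩ ⊩ ψ for every ψ ∈ Σ. -/

import Mathlib

/-- Formulas of interpretability logic. -/
inductive ILFormula : Type where
  | atom : ℕ → ILFormula
  | falsum : ILFormula
  | impl : ILFormula → ILFormula → ILFormula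
  | box : ILFormula → ILFormula
  | rhd : ILFormula → ILFormula → ILFormula
  deriving DecidableEq

namespace ILFormula
def neg (α : ILFormula) : ILFormula := impl α falsum
def dia (α : ILFormula) : ILFormula := neg (box (neg α))
def conj (α β : ILFormula) : ILFormula := neg (impl α (neg β))
def disj (α β : ILFormula) : ILFormula := impl (neg α) β
end ILFormula

open ILFormula

/-- The Hilbert calculus IL: classical propositional logic plus K, GL, J1–J5,
    with modus ponens and necessitation. -/
inductive ILProv : ILFormula → Prop where
  | imp1 (α β) : ILProv (impl α (impl β α))
  | imp2 (α β γ) : ILProv (impl (impl α (impl β γ)) (impl (impl α β) (impl α γ)))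
  | dne (α) : ILProv (impl (impl (impl α falsum) falsum) α)
  | axK (α β) : ILProv (impl (box (impl α β)) (impl (box α) (box β)))
  | axGL (α) : ILProv (impl (box (impl (box α) α)) (box α))
  | axJ1 (α β) : ILProv (impl (box (impl α β)) (rhd α β))
  | axJ2 (α β γ) : ILProv (impl (conj (rhd α β) (rhd β γ)) (rhd α γ))
  | axJ3 (α β γ) : ILProv (impl (conj (rhd α γ) (rhd β γ)) (rhd (disj α β) γ))
  | axJ4 (α β) : ILProv (impl (rhd α β) (impl (dia α) (dia β)))
  | axJ5 (α) : ILProv (rhd (dia α) α)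
  | mp {α β} : ILProv (impl α β) → ILProv α → ILProv β
  | nec {α} : ILProv α → ILProv (box α)

/-- Derivability in IL from a finite set of hypotheses, with necessitation
    not applied to hypotheses. -/
inductive ILProvFrom (Γ : Finset ILFormula) : ILFormula → Prop where
  | hyp {φ} : φ ∈ Γ → ILProvFrom Γ φ
  | thm {φ} : ILProv φ → ILProvFrom Γ φ
  | mp {φ ψ} : ILProvFrom Γ (impl φ ψ) → ILProvFrom Γ φ → ILProvFrom Γ ψ

/-- A Veltman frame. -/
structure VeltmanFrame (W : Type*) : Type _ where
  nonempty : Nonempty W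
  R : W → W → Prop
  S : W → W → W → Prop
  R_trans : ∀ {x y z}, R x y → R y z → R x z
  R_cwf : ¬ ∃ c : ℕ → W, ∀ n, R (c n) (c (n + 1))
  S_dom : ∀ {w u v}, S w u v → R w u ∧ R w v
  S_refl : ∀ {w u}, R w u → S w u u
  S_trans : ∀ {w u v x}, S w u v → S w v x → S w u x
  R_sub_S : ∀ {w u v}, R w u → R w v → R u v → S w u v

variable {W : Type*}

def Rinv (F : VeltmanFrame W) (X : Set W) : Set W := {w | ∃ x ∈ X, F.R w x}

def Rinvhat (F : VeltmanFrame W) (Y : Set W) : Set W := {x | ∀ y, F.R x y → y ∈ Y}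

def Sinv (F : VeltmanFrame W) (X Y : Set W) : Set W :=
  {w | ∀ x ∈ X, F.R w x → ∃ y ∈ Y, F.S w x y}

/-- The algebraic interpretation of a formula in a Veltman frame under valuation `e`. -/
def interp (F : VeltmanFrame W) (e : ℕ → Set W) : ILFormula → Set W
  | .atom n => e n
  | .falsum => ∅
  | .impl α β => (interp F e α)ᶜ ∪ interp F e β
  | .box α => Rinvhat F (interp F e α)
  | .rhd α β => Sinv F (interp F e α) (interp F e β)

/-- Forcing in a Veltman model `⟨F, ev⟩`. -/
def forces (F : VeltmanFrame W) (ev : ℕ → Set W) : ILFormula → W → Prop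
  | .atom n, w => w ∈ ev n
  | .falsum, _ => False
  | .impl α β, w => forces F ev α w → forces F ev β w
  | .box α, w => ∀ v, F.R w v → forces F ev α v
  | .rhd α β, w => ∀ u, F.R w u → forces F ev α u → ∃ v, F.S w u v ∧ forces F ev β v

/-- The filter-assuring successor relation `f ≺_l g`. -/
def Assur (F : VeltmanFrame W) (l : Set (Set W)) (f g : Ultrafilter W) : Prop :=
  ∀ (A : Set W) (T : Finset (Set W)), (↑T : Set (Set W)) ⊆ l →
    Sinv F Aᶜ (⋃ S ∈ T, Sᶜ) ∈ f → A ∈ g ∧ Rinvhat F A ∈ g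

/-- A proper filter of subsets of `W`. -/
def IsProperFilter (l : Set (Set W)) : Prop :=
  l.Nonempty ∧ ∅ ∉ l ∧ (∀ A ∈ l, ∀ B : Set W, A ⊆ B → B ∈ l) ∧
    (∀ A ∈ l, ∀ B ∈ l, A ∩ B ∈ l)

/-- Worlds of the ultrafilter extension: an ultrafilter with a sequence of labels. -/
abbrev UEWorld (W : Type*) := Ultrafilter W × List (Set (Set W))

/-- The domain `W^ue` of the ultrafilter extension, generated inductively. -/
inductive InWue (F : VeltmanFrame W) : UEWorld W → Prop where
  | nil (f : Ultrafilter W) : InWue F (f, [])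
  | cons {f g : Ultrafilter W} {σ : List (Set (Set W))} {l : Set (Set W)} :
      InWue F (f, σ) → Assur F l f g → InWue F (g, σ ++ [l])

/-- The one-step relation of the ultrafilter extension. -/
def RueOne (F : VeltmanFrame W) (p q : UEWorld W) : Prop :=
  ∃ l : Set (Set W), q.2 = p.2 ++ [l] ∧ Assur F l p.1 q.1

/-- `R^ue`: the transitive closure of the one-step relation. -/
def Rue (F : VeltmanFrame W) : UEWorld W → UEWorld W → Prop :=
  Relation.TransGen (RueOne F)

/-- `S^ue_p`: the smallest reflexive transitive relation containing the
    restriction of `R^ue` to `R^ue[p]` and the one-step `S` relation. -/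
inductive Sue (F : VeltmanFrame W) (p : UEWorld W) : UEWorld W → UEWorld W → Prop where
  | refl (q) : Rue F p q → Sue F p q q
  | ofR {q r} : Rue F p q → Rue F p r → Rue F q r → Sue F p q r
  | one {q r} : Rue F p q → Rue F p r → q.2[p.2.length]? = r.2[p.2.length]? → Sue F p q r
  | trans {q r s} : Sue F p q r → Sue F p r s → Sue F p q s

/-- Forcing in the ultrafilter extension `M^ue`. -/
def ueForces (F : VeltmanFrame W) (ev : ℕ → Set W) : ILFormula → UEWorld W → Prop
  | .atom n, p => ev n ∈ p.1
  | .falsum, _ => False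
  | .impl α β, p => ueForces F ev α p → ueForces F ev β p
  | .box α, p => ∀ q : UEWorld W, InWue F q → Rue F p q → ueForces F ev α q
  | .rhd α β, p => ∀ q : UEWorld W, InWue F q → Rue F p q → ueForces F ev α q →
      ∃ r : UEWorld W, InWue F r ∧ Sue F p q r ∧ ueForces F ev β r

/-- Conjunction of a finite list of formulas (`⊤` for the empty list). -/
def conjList : List ILFormula → ILFormula
  | [] => impl falsum falsum
  | φ :: L => conj φ (conjList L)

/-- The Pencil frame condition. -/
def Pencil (F : VeltmanFrame W) : Prop :=
  ∀ x y z u v : W, F.R x y → F.S x y z → F.R z u → F.R y v → F.S x v u → F.R y u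

section UEAux

open Set

variable {W : Type*}

lemma sinv_mono (F : VeltmanFrame W) {X Y Y' : Set W} (h : Y ⊆ Y') :
    Sinv F X Y ⊆ Sinv F X Y' := by
  intro w hw x hx hR
  obtain ⟨y, hy, hS⟩ := hw x hx hR
  exact ⟨y, h hy, hS⟩

lemma sinv_self_mem (F : VeltmanFrame W) (X : Set W) (w : W) : w ∈ Sinv F X X :=
  fun x hx hR => ⟨x, hx, F.S_refl hR⟩

lemma sinv_empty_subset (F : VeltmanFrame W) (A : Set W) :
    Sinv F Aᶜ ∅ ⊆ Rinvhat F A := by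
  intro w hw y hR
  by_contra hy
  obtain ⟨z, hz, -⟩ := hw y hy hR
  exact hz

lemma rinvhat_subset_sinv_empty (F : VeltmanFrame W) (A : Set W) :
    Rinvhat F A ⊆ Sinv F Aᶜ ∅ := by
  intro w hw x hx hR
  exact absurd (hw x hR) hx

lemma rinvhat_inter (F : VeltmanFrame W) (A B : Set W) :
    Rinvhat F (A ∩ B) = Rinvhat F A ∩ Rinvhat F B := by
  ext w
  constructor
  · intro h; exact ⟨fun y hy => (h y hy).1, fun y hy => (h y hy).2⟩
  · intro h y hy; exact ⟨h.1 y hy, h.2 y hy⟩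

lemma rinvhat_down (F : VeltmanFrame W) {A : Set W} {w y : W}
    (hw : w ∈ Rinvhat F A) (hR : F.R w y) : y ∈ A ∧ y ∈ Rinvhat F A :=
  ⟨hw y hR, fun z hz => hw z (F.R_trans hR hz)⟩

/-- The condition appearing in `Assur`. -/
def ACond (F : VeltmanFrame W) (f : Ultrafilter W) (l : Set (Set W)) (A : Set W) : Prop :=
  ∃ T : Finset (Set W), ↑T ⊆ l ∧ Sinv F Aᶜ (⋃ S ∈ T, Sᶜ) ∈ f

lemma acond_univ (F : VeltmanFrame W) (f : Ultrafilter W) (l : Set (Set W)) :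
    ACond F f l (Set.univ : Set W) := by
  refine ⟨∅, by simp, Filter.mem_of_superset Filter.univ_mem ?_⟩
  intro w _ x hx _
  exact absurd (mem_univ x) hx

lemma acond_inter (F : VeltmanFrame W) {f : Ultrafilter W} {l : Set (Set W)} {A₁ A₂ : Set W}
    (h1 : ACond F f l A₁) (h2 : ACond F f l A₂) : ACond F f l (A₁ ∩ A₂) := by
  classical
  obtain ⟨T₁, hT₁, hf₁⟩ := h1
  obtain ⟨T₂, hT₂, hf₂⟩ := h2
  refine ⟨T₁ ∪ T₂, ?_, Filter.mem_of_superset (Filter.inter_mem hf₁ hf₂) ?_⟩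
  · intro S hS
    rcases Finset.mem_union.mp (by exact_mod_cast hS) with h | h
    · exact hT₁ (by exact_mod_cast h)
    · exact hT₂ (by exact_mod_cast h)
  · rintro w ⟨hw1, hw2⟩ x hx hR
    by_cases hxA : x ∈ A₁
    · have hx2 : x ∈ A₂ᶜ := fun h => hx ⟨hxA, h⟩
      obtain ⟨y, hy, hS⟩ := hw2 x hx2 hR
      refine ⟨y, ?_, hS⟩
      simp only [mem_iUnion, exists_prop] at hy ⊢
      obtain ⟨S, hSmem, hyS⟩ := hy
      exact ⟨S, Finset.mem_union_right _ hSmem, hyS⟩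
    · obtain ⟨y, hy, hS⟩ := hw1 x hxA hR
      refine ⟨y, ?_, hS⟩
      simp only [mem_iUnion, exists_prop] at hy ⊢
      obtain ⟨S, hSmem, hyS⟩ := hy
      exact ⟨S, Finset.mem_union_left _ hSmem, hyS⟩

/-- Main construction: an ultrafilter `g` with `Assur F l f g` refining a given filter `H`. -/
lemma exists_assur (F : VeltmanFrame W) (f : Ultrafilter W) (l : Set (Set W)) (H : Filter W)
    (key : ∀ A : Set W, ACond F f l A → ∀ X ∈ H, (X ∩ A ∩ Rinvhat F A).Nonempty) :
    ∃ g : Ultrafilter W, Assur F l f g ∧ (↑g : Filter W) ≤ H := by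
  let G : Filter W :=
    { sets := {B | ∃ A, ACond F f l A ∧ ∃ X ∈ H, X ∩ A ∩ Rinvhat F A ⊆ B}
      univ_sets := ⟨Set.univ, acond_univ F f l, Set.univ, Filter.univ_mem, subset_univ _⟩
      sets_of_superset := by
        rintro B B' ⟨A, hA, X, hX, hsub⟩ hBB'
        exact ⟨A, hA, X, hX, hsub.trans hBB'⟩
      inter_sets := by
        rintro B₁ B₂ ⟨A₁, hA₁, X₁, hX₁, h1⟩ ⟨A₂, hA₂, X₂, hX₂, h2⟩
        refine ⟨A₁ ∩ A₂, acond_inter F hA₁ hA₂, X₁ ∩ X₂, Filter.inter_mem hX₁ hX₂, ?_⟩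
        rw [rinvhat_inter]
        rintro w ⟨⟨⟨hX1, hX2⟩, hA1, hA2⟩, hR1, hR2⟩
        exact ⟨h1 ⟨⟨hX1, hA1⟩, hR1⟩, h2 ⟨⟨hX2, hA2⟩, hR2⟩⟩ }
  have hGmem : ∀ B, B ∈ G ↔ ∃ A, ACond F f l A ∧ ∃ X ∈ H, X ∩ A ∩ Rinvhat F A ⊆ B :=
    fun B => Iff.rfl
  haveI : G.NeBot := by
    rw [← Filter.forall_mem_nonempty_iff_neBot]
    rintro B ⟨A, hA, X, hX, hsub⟩
    exact ((key A hA X hX).mono hsub)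
  obtain ⟨g, hg⟩ := Ultrafilter.exists_le G
  refine ⟨g, ?_, fun X hX => hg ?_⟩
  · intro A T hT hf
    constructor
    · exact hg ⟨A, ⟨T, hT, hf⟩, Set.univ, Filter.univ_mem, fun w hw => hw.1.2⟩
    · exact hg ⟨A, ⟨T, hT, hf⟩, Set.univ, Filter.univ_mem, fun w hw => hw.2⟩
  · exact ⟨Set.univ, acond_univ F f l, X, hX, fun w hw => hw.1.1⟩

lemma assur_box {F : VeltmanFrame W} {l : Set (Set W)} {f g : Ultrafilter W} {A : Set W}
    (h : Assur F l f g) (hA : Rinvhat F A ∈ f) : A ∈ g ∧ Rinvhat F A ∈ g := by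
  refine h A ∅ (by simp) (Filter.mem_of_superset hA ?_)
  have : (⋃ S ∈ (∅ : Finset (Set W)), Sᶜ) = (∅ : Set W) := by simp
  rw [this]
  exact rinvhat_subset_sinv_empty F A

lemma sinv_finset_empty (F : VeltmanFrame W) (A : Set W) {T : Finset (Set W)}
    (hT : (↑T : Set (Set W)) ⊆ (∅ : Set (Set W))) :
    Sinv F Aᶜ (⋃ S ∈ T, Sᶜ) ⊆ Rinvhat F A := by
  have hTe : T = ∅ := by
    ext S; simp only [Finset.notMem_empty, iff_false]
    intro hS
    exact hT (by exact_mod_cast hS)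
  subst hTe
  have : (⋃ S ∈ (∅ : Finset (Set W)), Sᶜ) = (∅ : Set W) := by simp
  rw [this]
  exact sinv_empty_subset F A

lemma rue_suffix {F : VeltmanFrame W} {p q : UEWorld W} (h : Rue F p q) :
    ∃ s : List (Set (Set W)), s ≠ [] ∧ q.2 = p.2 ++ s := by
  induction h with
  | single h => obtain ⟨l, h1, -⟩ := h; exact ⟨[l], by simp, h1⟩
  | tail _ h ih =>
    obtain ⟨l, h1, -⟩ := h
    obtain ⟨s, hs, h2⟩ := ih
    exact ⟨s ++ [l], by simp, by rw [h1, h2, List.append_assoc]⟩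

lemma rue_box {F : VeltmanFrame W} {p q : UEWorld W} {A : Set W}
    (h : Rue F p q) (hA : Rinvhat F A ∈ p.1) : A ∈ q.1 ∧ Rinvhat F A ∈ q.1 := by
  induction h with
  | single h => obtain ⟨l, -, ha⟩ := h; exact assur_box ha hA
  | tail _ h ih => obtain ⟨l, -, ha⟩ := h; exact assur_box ha ih.2

lemma rue_head {F : VeltmanFrame W} {p q : UEWorld W} (h : Rue F p q) :
    ∃ c : UEWorld W, RueOne F p c ∧ (c = q ∨ Rue F c q) := by
  induction h with
  | single h => exact ⟨_, h, Or.inl rfl⟩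
  | tail _ h ih =>
    obtain ⟨c, hc, hcq⟩ := ih
    rcases hcq with rfl | hcq
    · exact ⟨c, hc, Or.inr (Relation.TransGen.single h)⟩
    · exact ⟨c, hc, Or.inr (hcq.tail h)⟩

lemma rue_first {F : VeltmanFrame W} {p q : UEWorld W} (h : Rue F p q) :
    ∃ l : Set (Set W), q.2[p.2.length]? = some l ∧
      ∀ (A : Set W) (T : Finset (Set W)), (↑T : Set (Set W)) ⊆ l →
        Sinv F Aᶜ (⋃ S ∈ T, Sᶜ) ∈ p.1 → A ∈ q.1 := by
  obtain ⟨c, ⟨l, he, ha⟩, hcq⟩ := rue_head h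
  refine ⟨l, ?_, ?_⟩
  · rcases hcq with rfl | hcq
    · rw [he]; exact List.getElem?_concat_length
    · obtain ⟨s, -, e2⟩ := rue_suffix hcq
      rw [e2, he, List.append_assoc, List.getElem?_append_right (le_refl _)]
      simp
  · intro A T hT hf
    have h1 := ha A T hT hf
    rcases hcq with rfl | hcq
    · exact h1.1
    · exact (rue_box hcq h1.2).1

lemma sue_spec {F : VeltmanFrame W} {p q r : UEWorld W} (h : Sue F p q r) :
    Rue F p r ∧ q.2[p.2.length]? = r.2[p.2.length]? := by
  induction h with
  | refl q h => exact ⟨h, rfl⟩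
  | ofR hpq hpr hqr =>
    refine ⟨hpr, ?_⟩
    obtain ⟨s, hs, e⟩ := rue_suffix hqr
    obtain ⟨s', hs', e'⟩ := rue_suffix hpq
    rw [e, List.getElem?_append_left]
    rw [e', List.length_append]
    have : s'.length ≠ 0 := fun h0 => hs' (List.eq_nil_of_length_eq_zero h0)
    omega
  | one _ hpr e => exact ⟨hpr, e⟩
  | trans _ _ ih1 ih2 => exact ⟨ih2.1, ih1.2.trans ih2.2⟩

end UEAux
section UETruth

open Set

variable {W : Type*}

lemma rue_single {F : VeltmanFrame W} {p q : UEWorld W} (h : RueOne F p q) : Rue F p q :=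
  Relation.TransGen.single h

theorem ue_truth (F : VeltmanFrame W) (ev : ℕ → Set W) :
    ∀ (φ : ILFormula) (p : UEWorld W), InWue F p →
      (ueForces F ev φ p ↔ interp F ev φ ∈ p.1) := by
  intro φ
  induction φ with
  | atom n =>
    intro p hp
    exact Iff.rfl
  | falsum =>
    intro p hp
    simp only [ueForces, interp]
    exact iff_of_false id Ultrafilter.empty_notMem
  | impl α β ihα ihβ =>
    intro p hp
    simp only [ueForces, interp]
    rw [ihα p hp, ihβ p hp]
    constructor
    · intro h
      rcases Classical.em (interp F ev α ∈ p.1) with hα | hα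
      · exact Filter.mem_of_superset (h hα) Set.subset_union_right
      · exact Filter.mem_of_superset (Ultrafilter.compl_mem_iff_notMem.mpr hα)
          Set.subset_union_left
    · intro h hα
      rcases Ultrafilter.union_mem_iff.mp h with h1 | h1
      · exact absurd hα (Ultrafilter.compl_mem_iff_notMem.mp h1)
      · exact h1
  | box α ih =>
    rintro ⟨f, σ⟩ hp
    simp only [ueForces, interp]
    constructor
    · intro h
      by_contra hmem
      have hC : (Rinvhat F (interp F ev α))ᶜ ∈ f := Ultrafilter.compl_mem_iff_notMem.mpr hmem
      have key : ∀ A : Set W, ACond F f (∅ : Set (Set W)) A →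
          ∀ X ∈ Filter.principal (interp F ev α)ᶜ, (X ∩ A ∩ Rinvhat F A).Nonempty := by
        rintro A ⟨T, hT, hfT⟩ X hX
        have hRA : Rinvhat F A ∈ f := Filter.mem_of_superset hfT (sinv_finset_empty F A hT)
        obtain ⟨w, hw1, hw2⟩ := Filter.nonempty_of_mem (Filter.inter_mem hC hRA)
        simp only [mem_compl_iff, Rinvhat, mem_setOf_eq] at hw1
        push_neg at hw1
        obtain ⟨y, hRy, hy⟩ := hw1
        obtain ⟨hyA, hyRA⟩ := rinvhat_down F hw2 hRy
        exact ⟨y, ⟨⟨Filter.mem_principal.mp hX hy, hyA⟩, hyRA⟩⟩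
      obtain ⟨g, hassur, hle⟩ := exists_assur F f ∅ (Filter.principal (interp F ev α)ᶜ) key
      have hgc : (interp F ev α)ᶜ ∈ g := hle (Filter.mem_principal_self _)
      have hq : InWue F (g, σ ++ [(∅ : Set (Set W))]) := hp.cons hassur
      have hrq : Rue F (f, σ) (g, σ ++ [(∅ : Set (Set W))]) :=
        rue_single ⟨∅, rfl, hassur⟩
      have hforce := h _ hq hrq
      rw [ih _ hq] at hforce
      exact Ultrafilter.compl_mem_iff_notMem.mp hgc hforce
    · intro hmem q hq hrq
      rw [ih q hq]
      exact (rue_box hrq hmem).1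
  | rhd α β ihα ihβ =>
    rintro ⟨f, σ⟩ hp
    simp only [ueForces, interp]
    constructor
    · intro h
      by_contra hmem
      have hC : (Sinv F (interp F ev α) (interp F ev β))ᶜ ∈ f :=
        Ultrafilter.compl_mem_iff_notMem.mpr hmem
      set l : Set (Set W) := {(interp F ev β)ᶜ} with hl
      have key : ∀ A : Set W, ACond F f l A →
          ∀ X ∈ Filter.principal (interp F ev α), (X ∩ A ∩ Rinvhat F A).Nonempty := by
        rintro A ⟨T, hT, hfT⟩ X hX
        have hsub : (⋃ S ∈ T, Sᶜ) ⊆ interp F ev β := by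
          intro y hy
          simp only [mem_iUnion, exists_prop] at hy
          obtain ⟨S, hS, hyS⟩ := hy
          have hSe : S = (interp F ev β)ᶜ := hT (by exact_mod_cast hS)
          rw [hSe, compl_compl] at hyS
          exact hyS
        have hf' : Sinv F Aᶜ (interp F ev β) ∈ f :=
          Filter.mem_of_superset hfT (sinv_mono F hsub)
        obtain ⟨w, hwC, hwS⟩ := Filter.nonempty_of_mem (Filter.inter_mem hC hf')
        simp only [mem_compl_iff, Sinv, mem_setOf_eq] at hwC
        push_neg at hwC
        obtain ⟨x, hxα, hRx, hxno⟩ := hwC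
        have hxA : x ∈ A := by
          by_contra hxA
          obtain ⟨y, hyβ, hS⟩ := hwS x hxA hRx
          exact hxno y hyβ hS
        have hxRA : x ∈ Rinvhat F A := by
          intro z hz
          by_contra hzA
          have hRwz := F.R_trans hRx hz
          obtain ⟨y, hyβ, hS⟩ := hwS z hzA hRwz
          exact hxno y hyβ (F.S_trans (F.R_sub_S hRx hRwz hz) hS)
        exact ⟨x, ⟨⟨Filter.mem_principal.mp hX hxα, hxA⟩, hxRA⟩⟩
      obtain ⟨g, hassur, hle⟩ := exists_assur F f l (Filter.principal (interp F ev α)) key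
      have hgα : interp F ev α ∈ g := hle (Filter.mem_principal_self _)
      have hq : InWue F (g, σ ++ [l]) := hp.cons hassur
      have hrq : Rue F (f, σ) (g, σ ++ [l]) := rue_single ⟨l, rfl, hassur⟩
      have hfα : ueForces F ev α (g, σ ++ [l]) := (ihα _ hq).mpr hgα
      obtain ⟨r, hrW, hsue, hfβ⟩ := h _ hq hrq hfα
      have hβr : interp F ev β ∈ r.1 := (ihβ r hrW).mp hfβ
      obtain ⟨hpr, hent⟩ := sue_spec hsue
      obtain ⟨l', he', htrans⟩ := rue_first hpr
      have hql : (σ ++ [l])[σ.length]? = some l := List.getElem?_concat_length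
      have hll' : l' = l := by
        have : some l = some l' := by
          rw [← hql, ← he']
          exact hent
        exact (Option.some.injEq _ _ ▸ this).symm
      subst hll'
      have hβc : (interp F ev β)ᶜ ∈ r.1 := by
        refine htrans ((interp F ev β)ᶜ) {(interp F ev β)ᶜ} (by simp [hl]) ?_
        have hU : (⋃ S ∈ ({(interp F ev β)ᶜ} : Finset (Set W)), Sᶜ) = interp F ev β := by
          simp
        rw [compl_compl, hU]
        exact Filter.univ_mem' (fun w => sinv_self_mem F _ w)
      exact Ultrafilter.compl_mem_iff_notMem.mp hβc hβr
    · intro hmem q hq hrq hfα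
      have hgα : interp F ev α ∈ q.1 := (ihα q hq).mp hfα
      obtain ⟨l₁, hel, htrans⟩ := rue_first hrq
      have key : ∀ A : Set W, ACond F f l₁ A →
          ∀ X ∈ Filter.principal (interp F ev β), (X ∩ A ∩ Rinvhat F A).Nonempty := by
        rintro A ⟨T, hT, hfT⟩ X hX
        by_contra hne
        have hempty : ∀ y, y ∈ interp F ev β → y ∈ A → y ∈ Rinvhat F A → False := by
          intro y h1 h2 h3
          exact hne ⟨y, ⟨⟨Filter.mem_principal.mp hX h1, h2⟩, h3⟩⟩
        have hsub : Sinv F (interp F ev α) (interp F ev β) ∩ Sinv F Aᶜ (⋃ S ∈ T, Sᶜ) ⊆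
            Sinv F (A ∩ Rinvhat F A ∩ (interp F ev α)ᶜ)ᶜ (⋃ S ∈ T, Sᶜ) := by
          rintro w ⟨hD, hE⟩
          have hstep : ∀ z, F.R w z → (z ∉ A ∨ z ∉ Rinvhat F A) →
              ∃ u ∈ (⋃ S ∈ T, Sᶜ), F.S w z u := by
            intro z hRz hz
            rcases hz with hz | hz
            · exact hE z hz hRz
            · simp only [Rinvhat, mem_setOf_eq] at hz
              push_neg at hz
              obtain ⟨z', hzz', hz'A⟩ := hz
              have hRwz' := F.R_trans hRz hzz'
              obtain ⟨u, hu, hSu⟩ := hE z' hz'A hRwz'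
              exact ⟨u, hu, F.S_trans (F.R_sub_S hRz hRwz' hzz') hSu⟩
          intro x hx hRx
          by_cases hxa : x ∈ A ∧ x ∈ Rinvhat F A
          · have hxα : x ∈ interp F ev α := by
              by_contra hxα
              exact hx ⟨⟨hxa.1, hxa.2⟩, hxα⟩
            obtain ⟨y, hyβ, hSy⟩ := hD x hxα hRx
            have hRwy := (F.S_dom hSy).2
            have hy' : y ∉ A ∨ y ∉ Rinvhat F A := by
              by_contra hc
              push_neg at hc
              exact hempty y hyβ hc.1 hc.2
            obtain ⟨u, hu, hSu⟩ := hstep y hRwy hy'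
            exact ⟨u, hu, F.S_trans hSy hSu⟩
          · rcases not_and_or.mp hxa with hxA | hxA
            · exact hstep x hRx (Or.inl hxA)
            · exact hstep x hRx (Or.inr hxA)
        have hA' : Sinv F (A ∩ Rinvhat F A ∩ (interp F ev α)ᶜ)ᶜ (⋃ S ∈ T, Sᶜ) ∈ f :=
          Filter.mem_of_superset (Filter.inter_mem hmem hfT) hsub
        have hA'g : A ∩ Rinvhat F A ∩ (interp F ev α)ᶜ ∈ q.1 := htrans _ T hT hA'
        obtain ⟨y, ⟨⟨-, hyc⟩, hyα⟩⟩ :=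
          Filter.nonempty_of_mem (Filter.inter_mem hA'g hgα)
        exact hyc hyα
      obtain ⟨h', hassur, hle⟩ := exists_assur F f l₁ (Filter.principal (interp F ev β)) key
      have hr : InWue F (h', σ ++ [l₁]) := hp.cons hassur
      refine ⟨(h', σ ++ [l₁]), hr, ?_, (ihβ _ hr).mpr (hle (Filter.mem_principal_self _))⟩
      refine Sue.one hrq (rue_single ⟨l₁, rfl, hassur⟩) ?_
      rw [hel]
      exact (List.getElem?_concat_length).symm

end UETruth
section UEMain

open Set

variable {W : Type*}

lemma interp_conj (F : VeltmanFrame W) (ev : ℕ → Set W) (a b : ILFormula) :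
    interp F ev (ILFormula.conj a b) = interp F ev a ∩ interp F ev b := by
  simp [ILFormula.conj, ILFormula.neg, interp, Set.union_empty, Set.compl_union, compl_compl]

lemma interp_conjList_append (F : VeltmanFrame W) (ev : ℕ → Set W) (L₁ L₂ : List ILFormula) :
    interp F ev (conjList (L₁ ++ L₂)) =
      interp F ev (conjList L₁) ∩ interp F ev (conjList L₂) := by
  induction L₁ with
  | nil => simp [conjList, interp]
  | cons φ L ih =>
    simp only [List.cons_append, conjList, interp_conj, List.append_eq, ih, Set.inter_assoc]

lemma interp_conjList_subset (F : VeltmanFrame W) (ev : ℕ → Set W) {ψ : ILFormula}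
    {L : List ILFormula} (h : ψ ∈ L) :
    interp F ev (conjList L) ⊆ interp F ev ψ := by
  induction L with
  | nil => cases h
  | cons φ L ih =>
    rw [conjList, interp_conj]
    rcases List.mem_cons.mp h with rfl | h
    · exact Set.inter_subset_left
    · exact Set.inter_subset_right.trans (ih h)

end UEMain
/-- the ultrafilter extension is modally saturated. -/
theorem ueModel_modally_saturated {W : Type*} (F : VeltmanFrame W)
    (ev : ℕ → Set W) (p : UEWorld W) (hp : InWue F p) (Sig : Set ILFormula)
    (hloc : ∀ L : List ILFormula, (∀ ψ ∈ L, ψ ∈ Sig) →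
      ueForces F ev (ILFormula.dia (conjList L)) p) :
    ∃ q : UEWorld W, InWue F q ∧ Rue F p q ∧ ∀ ψ ∈ Sig, ueForces F ev ψ q := by
  classical
  obtain ⟨f, σ⟩ := p
  let H : Filter W :=
    { sets := {B | ∃ L : List ILFormula, (∀ ψ ∈ L, ψ ∈ Sig) ∧ interp F ev (conjList L) ⊆ B}
      univ_sets := ⟨[], by simp, Set.subset_univ _⟩
      sets_of_superset := by
        rintro B B' ⟨L, hL, hsub⟩ h
        exact ⟨L, hL, hsub.trans h⟩
      inter_sets := by
        rintro B₁ B₂ ⟨L₁, hL₁, h1⟩ ⟨L₂, hL₂, h2⟩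
        refine ⟨L₁ ++ L₂, ?_, ?_⟩
        · intro ψ hψ
          rcases List.mem_append.mp hψ with h | h
          exacts [hL₁ ψ h, hL₂ ψ h]
        · rw [interp_conjList_append]
          exact fun w hw => ⟨h1 hw.1, h2 hw.2⟩ }
  have key : ∀ A : Set W, ACond F f (∅ : Set (Set W)) A →
      ∀ X ∈ H, (X ∩ A ∩ Rinvhat F A).Nonempty := by
    rintro A ⟨T, hT, hfT⟩ X ⟨L, hL, hsub⟩
    have hRA : Rinvhat F A ∈ f := Filter.mem_of_superset hfT (sinv_finset_empty F A hT)
    have hdia := hloc L hL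
    simp only [ILFormula.dia, ILFormula.neg, ueForces] at hdia
    have hnb : Rinvhat F (interp F ev (conjList L))ᶜ ∉ f := by
      intro hmem
      apply hdia
      intro q hq hrq hχ
      have h1 : interp F ev (conjList L) ∈ q.1 := (ue_truth F ev _ q hq).mp hχ
      have h2 : (interp F ev (conjList L))ᶜ ∈ q.1 := (rue_box hrq hmem).1
      exact Ultrafilter.compl_mem_iff_notMem.mp h2 h1
    have hcompl : (Rinvhat F (interp F ev (conjList L))ᶜ)ᶜ ∈ f :=
      Ultrafilter.compl_mem_iff_notMem.mpr hnb
    obtain ⟨w, hw1, hw2⟩ := Filter.nonempty_of_mem (Filter.inter_mem hcompl hRA)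
    simp only [Set.mem_compl_iff, Rinvhat, Set.mem_setOf_eq] at hw1
    push_neg at hw1
    obtain ⟨y, hRy, hy⟩ := hw1
    obtain ⟨hyA, hyRA⟩ := rinvhat_down F hw2 hRy
    exact ⟨y, ⟨⟨hsub hy, hyA⟩, hyRA⟩⟩
  obtain ⟨g, hassur, hle⟩ := exists_assur F f ∅ H key
  refine ⟨(g, σ ++ [(∅ : Set (Set W))]), hp.cons hassur,
    rue_single ⟨∅, rfl, hassur⟩, ?_⟩
  intro ψ hψ
  have hmem : interp F ev ψ ∈ g := by
    refine hle ?_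
    exact ⟨[ψ], by simpa using hψ, interp_conjList_subset F ev (by simp)⟩
  exact (ue_truth F ev ψ _ (hp.cons hassur)).mpr hmem
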